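/- arXiv:1912.11165 — 2 statements merged into one kernel-verified Lean document; each statement's English description precedes it below -/
import Mathlib

section
/- Pruning soundness (Property 1): Let δ be a finite database of C-sequences, k ∈ ℕ, and ξ ∈ ℝ. If an L-sequence L is unpromising, i.e. LWU_k(L) < ξ, then every L-sequence L' with L a sub-L-sequence of L' and |L'| ≤ k satisfies u_max(L') < ξ; that is, every such super-L-sequence of L is of low utility. -/
open scoped Classical

variable {α : Type*}

/-- C-eventset containment: `(c, λ) ⊑ (c', λ')` iff `c ⊆ c'` and `λ = λ'`. -/
def EsetSub (σ τ : Finset α × ℕ) : Prop := σ.1 ⊆ τ.1 ∧ σ.2 = τ.2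

/-- C-sequence containment: `C ⊑ C'` iff there are strictly increasing indices
`j_1 < … < j_n` into `C'` with `σ_k ⊑ σ'_{j_k}` for all `k`. -/
def CSub (C C' : List (Finset α × ℕ)) : Prop :=
  ∃ D : List (Finset α × ℕ), D.Sublist C' ∧ List.Forall₂ EsetSub C D

/-- `C ∼ L` : the C-sequence `C` matches the L-sequence `L`. -/
def Matches (C : List (Finset α × ℕ)) (L : List (Finset α)) : Prop :=
  C.map Prod.fst = L

/-- `L` is a sub-L-sequence of `L'`. -/
def LSub (L L' : List (Finset α)) : Prop :=
  ∃ M : List (Finset α), M.Sublist L' ∧ List.Forall₂ (fun a b => a ⊆ b) L M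

/-- Utility of a C-eventset: `u_e (c, λ) = λ · Σ_{l ∈ c} p l`. -/
noncomputable def ue (p : α → ℝ) (σ : Finset α × ℕ) : ℝ := (σ.2 : ℝ) * ∑ l ∈ σ.1, p l

/-- Utility of a C-sequence: sum of the utilities of its C-eventsets. -/
noncomputable def us (p : α → ℝ) (C : List (Finset α × ℕ)) : ℝ := (C.map (ue p)).sum

/-- `u_maxk (C, k)`: the maximum utility of at most `k` C-eventsets in `C`. -/
noncomputable def umaxk (p : α → ℝ) (C : List (Finset α × ℕ)) (k : ℕ) : ℝ :=
  sSup { x : ℝ | ∃ C'', CSub C'' C ∧ C''.length ≤ k ∧ x = us p C'' }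

/-- `LWU_k(L)`: the L-sequence-weighted utilization of `L` w.r.t. maximum length `k`. -/
noncomputable def LWU (p : α → ℝ) (δ : Finset (List (Finset α × ℕ))) (k : ℕ)
    (L : List (Finset α)) : ℝ :=
  ∑ C ∈ δ, if ∃ C', CSub C' C ∧ Matches C' L then umaxk p C k else 0

/-- `u_max(L)`: the maximum utility of the L-sequence `L` in the database `δ`. -/
noncomputable def umax (p : α → ℝ) (δ : Finset (List (Finset α × ℕ)))
    (L : List (Finset α)) : ℝ :=
  ∑ C ∈ δ, sSup ({ x : ℝ | ∃ C', CSub C' C ∧ Matches C' L ∧ x = us p C' } ∪ {0})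


instance : IsTrans (Finset α × ℕ) EsetSub :=
  ⟨fun _ _ _ h₁ h₂ => ⟨h₁.1.trans h₂.1, h₁.2.trans h₂.2⟩⟩

lemma csub_iff {C C' : List (Finset α × ℕ)} :
    CSub C C' ↔ List.SublistForall₂ EsetSub C C' := by
  rw [List.sublistForall₂_iff]; exact ⟨fun ⟨D,h1,h2⟩ => ⟨D,h2,h1⟩, fun ⟨D,h1,h2⟩ => ⟨D,h2,h1⟩⟩

lemma csub_trans {A B C : List (Finset α × ℕ)} (h1 : CSub A B) (h2 : CSub B C) : CSub A C :=
  csub_iff.2 (Trans.trans (csub_iff.1 h1) (csub_iff.1 h2))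

lemma ue_nonneg (p : α → ℝ) (hp : ∀ l, 0 ≤ p l) (σ : Finset α × ℕ) : 0 ≤ ue p σ :=
  mul_nonneg (by positivity) (Finset.sum_nonneg fun l _ => hp l)

lemma ue_mono (p : α → ℝ) (hp : ∀ l, 0 ≤ p l) {σ τ : Finset α × ℕ} (h : EsetSub σ τ) :
    ue p σ ≤ ue p τ := by
  unfold ue; rw [h.2]
  exact mul_le_mul_of_nonneg_left
    (Finset.sum_le_sum_of_subset_of_nonneg h.1 (fun l _ _ => hp l)) (by positivity)

lemma us_mono (p : α → ℝ) (hp : ∀ l, 0 ≤ p l) {A B : List (Finset α × ℕ)}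
    (h : CSub A B) : us p A ≤ us p B := by
  obtain ⟨D, hD, hF⟩ := h
  have h1 : us p A ≤ us p D := by
    clear hD
    induction hF with
    | nil => exact le_rfl
    | cons hab htail ih =>
        simp only [us, List.map_cons, List.sum_cons]
        exact add_le_add (ue_mono p hp hab) ih
  have h2 : us p D ≤ us p B :=
    List.Sublist.sum_le_sum (hD.map (ue p))
      (by rintro x hx; obtain ⟨σ, -, rfl⟩ := List.mem_map.1 hx; exact ue_nonneg p hp σ)
  exact h1.trans h2

lemma build_match : ∀ {L M : List (Finset α)}, List.Forall₂ (fun a b => a ⊆ b) L M →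
    ∀ {D : List (Finset α × ℕ)}, D.map Prod.fst = M →
    ∃ C₀, List.Forall₂ EsetSub C₀ D ∧ C₀.map Prod.fst = L := by
  intro L M h
  induction h with
  | nil =>
      intro D hD
      rw [List.map_eq_nil_iff] at hD; subst hD
      exact ⟨[], List.Forall₂.nil, rfl⟩
  | @cons a b L' M' hab htail ih =>
      intro D hD
      cases D with
      | nil => simp at hD
      | cons σ D' =>
          simp only [List.map_cons, List.cons.injEq] at hD
          obtain ⟨C₀, hF, hm⟩ := ih hD.2
          exact ⟨(a, σ.2) :: C₀,
            List.Forall₂.cons ⟨by simpa [hD.1] using hab, rfl⟩ hF,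
            by simp [hm]⟩

/-- Pruning soundness, Property 1: if `LWU_k(L) < ξ`, then every
super-L-sequence `L'` of `L` with `|L'| ≤ k` has `u_max(L') < ξ`. -/
theorem pruning_sound (p : α → ℝ) (hp : ∀ l, 0 ≤ p l)
    (δ : Finset (List (Finset α × ℕ))) (k : ℕ) (ξ : ℝ)
    (L : List (Finset α)) (hunprom : LWU p δ k L < ξ) :
    ∀ L' : List (Finset α), LSub L L' → L'.length ≤ k → umax p δ L' < ξ := by
  intro L' hsub hlen
  refine lt_of_le_of_lt ?_ hunprom
  unfold umax LWU
  apply Finset.sum_le_sum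
  intro C hC
  have hbdd : BddAbove { x : ℝ | ∃ C'', CSub C'' C ∧ C''.length ≤ k ∧ x = us p C'' } :=
    ⟨us p C, by rintro x ⟨C'', hs, -, rfl⟩; exact us_mono p hp hs⟩
  have h0mem : (0:ℝ) ∈ { x : ℝ | ∃ C'', CSub C'' C ∧ C''.length ≤ k ∧ x = us p C'' } :=
    ⟨[], ⟨[], List.nil_sublist _, List.Forall₂.nil⟩, by simp, by simp [us]⟩
  have humaxk0 : 0 ≤ umaxk p C k := le_csSup hbdd h0mem
  have hR0 : (0:ℝ) ≤ if ∃ C', CSub C' C ∧ Matches C' L then umaxk p C k else 0 := by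
    split
    · exact humaxk0
    · exact le_rfl
  apply Real.sSup_le _ hR0
  rintro x (⟨C', hC'sub, hmatch, rfl⟩ | hx)
  · obtain ⟨M, hM, hF⟩ := hsub
    rw [← hmatch] at hM
    obtain ⟨D, hD, rfl⟩ := List.sublist_map_iff.1 hM
    obtain ⟨C₀, hC₀F, hC₀m⟩ := build_match hF rfl
    rw [if_pos ⟨C₀, csub_trans ⟨D, hD, hC₀F⟩ hC'sub, hC₀m⟩]
    refine le_csSup hbdd ⟨C', hC'sub, ?_, rfl⟩
    have : C'.length = L'.length := by rw [← hmatch, List.length_map]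
    omega
  · rw [Set.mem_singleton_iff] at hx; subst hx; exact hR0
end

section
/- Serial-concatenation corollary of LDCP: Let δ be a finite database of C-sequences and k ∈ ℕ. For all L-sequences L and L'' with |L| + |L''| ≤ k, the serial concatenation L ⊕ L'' (the list concatenation of L followed by L'') satisfies LWU_k(L ⊕ L'') ≤ LWU_k(L) and LWU_k(L ⊕ L'') ≤ LWU_k(L''). -/
open scoped Classical

variable {α : Type*}

lemma us_nonneg (p : α → ℝ) (hp : ∀ l, 0 ≤ p l) (C : List (Finset α × ℕ)) : 0 ≤ us p C := by
  unfold us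
  apply List.sum_nonneg
  intro x hx
  obtain ⟨y, _, rfl⟩ := List.mem_map.mp hx
  exact ue_nonneg p hp y

lemma umaxk_nonneg (p : α → ℝ) (hp : ∀ l, 0 ≤ p l) (C : List (Finset α × ℕ)) (k : ℕ) :
    0 ≤ umaxk p C k := by
  apply Real.sSup_nonneg
  rintro x ⟨C'', _, _, rfl⟩
  exact us_nonneg p hp C''

lemma csub_take {C' C : List (Finset α × ℕ)} (n : ℕ) (h : CSub C' C) :
    CSub (C'.take n) C := by
  obtain ⟨D, hD, hf⟩ := h
  exact ⟨D.take n, (List.take_sublist n D).trans hD, List.forall₂_take n hf⟩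

lemma csub_drop {C' C : List (Finset α × ℕ)} (n : ℕ) (h : CSub C' C) :
    CSub (C'.drop n) C := by
  obtain ⟨D, hD, hf⟩ := h
  exact ⟨D.drop n, (List.drop_sublist n D).trans hD, List.forall₂_drop n hf⟩

lemma match_concat_left {C' : List (Finset α × ℕ)} {L L'' : List (Finset α)}
    (h : Matches C' (L ++ L'')) : Matches (C'.take L.length) L := by
  unfold Matches at *
  rw [List.map_take, h, List.take_left]

lemma match_concat_right {C' : List (Finset α × ℕ)} {L L'' : List (Finset α)}
    (h : Matches C' (L ++ L'')) : Matches (C'.drop L.length) L'' := by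
  unfold Matches at *
  rw [List.map_drop, h, List.drop_left]

/-- Serial-concatenation corollary of LDCP: if `|L| + |L''| ≤ k` then
`LWU_k(L ⊕ L'') ≤ LWU_k(L)` and `LWU_k(L ⊕ L'') ≤ LWU_k(L'')`. -/
theorem ldcp_serial_concat (p : α → ℝ) (hp : ∀ l, 0 ≤ p l)
    (δ : Finset (List (Finset α × ℕ))) (k : ℕ)
    (L L'' : List (Finset α)) (hlen : L.length + L''.length ≤ k) :
    LWU p δ k (L ++ L'') ≤ LWU p δ k L ∧ LWU p δ k (L ++ L'') ≤ LWU p δ k L'' := by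
  have key : ∀ (L' : List (Finset α)),
      (∀ C' : List (Finset α × ℕ), Matches C' (L ++ L'') →
        ∀ C, CSub C' C → ∃ C₀, CSub C₀ C ∧ Matches C₀ L') →
      LWU p δ k (L ++ L'') ≤ LWU p δ k L' := by
    intro L' hL'
    apply Finset.sum_le_sum
    intro C _
    by_cases h : ∃ C', CSub C' C ∧ Matches C' (L ++ L'')
    · obtain ⟨C', hsub, hm⟩ := h
      rw [if_pos ⟨C', hsub, hm⟩, if_pos (hL' C' hm C hsub)]
    · rw [if_neg h]
      split
      · exact umaxk_nonneg p hp C k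
      · exact le_refl 0
  constructor
  · exact key L fun C' hm C hsub =>
      ⟨C'.take L.length, csub_take _ hsub, match_concat_left hm⟩
  · exact key L'' fun C' hm C hsub =>
      ⟨C'.drop L.length, csub_drop _ hsub, match_concat_right hm⟩
end
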